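/- arXiv:0807.1141 — 2 statements merged into one kernel-verified Lean document; each statement's English description precedes it below -/
import Mathlib

section
/- Every countable locally finite-by-abelian group G contains a free abelian subgroup H of locally finite index in G such that Q(H) = G, where Q(H) = {x ∈ G : {h⁻¹xh : h ∈ H} is finite} is the quasi-centralizer of H in G. -/
/-- A group is finite-by-abelian: it has a finite normal subgroup with abelian quotient. -/
def FiniteByAbelian (G : Type*) [Group G] : Prop :=
  ∃ N : Subgroup G, N.Normal ∧ Finite N ∧ ∀ a b : G, a * b * a⁻¹ * b⁻¹ ∈ N

/-- A group is locally finite-by-abelian: every finitely generated subgroup is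
finite-by-abelian. -/
def LocallyFiniteByAbelian (G : Type*) [Group G] : Prop :=
  ∀ K : Subgroup G, Group.FG K → FiniteByAbelian K

/-- A subgroup `H` of a group `G` has locally finite index in `G`: `H` has finite index
in every subgroup of `G` generated by `H ∪ F` for a finite set `F ⊆ G`. -/
def LocallyFiniteIndex {G : Type*} [Group G] (H : Subgroup G) : Prop :=
  ∀ F : Finset G, H.relIndex (H ⊔ Subgroup.closure (F : Set G)) ≠ 0

/-- The quasi-centralizer of a subset `A` of a group `G`. -/
def quasiCentralizer {G : Type*} [Group G] (A : Set G) : Set G :=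
  {x : G | ((fun a => a⁻¹ * x * a) '' A).Finite}



open Submodule in
theorem myAbelianCoreAdd {M : Type*} [AddCommGroup M] [hfg : AddGroup.FG M] (S : AddSubgroup M) :
    ∃ (k : ℕ) (b : Fin k → M),
      (∀ e : Fin k → ℤ, ∑ j, e j • b j = 0 → ∀ j, e j = 0) ∧
      (S ⊔ AddSubgroup.closure (Set.range b)).index ≠ 0 ∧
      AddSubgroup.closure (Set.range b) ⊓ S = ⊥ := by
  haveI : Module.Finite ℤ M := Module.Finite.iff_addGroup_fg.mpr hfg
  set T : Submodule ℤ M := Submodule.torsion ℤ M with hT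
  let Q := M ⧸ T
  haveI : Module.Free ℤ Q := Module.free_of_finite_type_torsion_free'
  let ρ : M →ₗ[ℤ] Q := T.mkQ
  let 𝕊 : Submodule ℤ M := AddSubgroup.toIntSubmodule S
  let Sb : Submodule ℤ Q := 𝕊.map ρ
  let Q2 := Q ⧸ Sb
  let T2 : Submodule ℤ Q2 := Submodule.torsion ℤ Q2
  let F := Q2 ⧸ T2
  haveI : Module.Free ℤ F := Module.free_of_finite_type_torsion_free'
  let π : Q →ₗ[ℤ] F := T2.mkQ ∘ₗ Sb.mkQ
  have hπsurj : Function.Surjective π := (T2.mkQ_surjective).comp (Sb.mkQ_surjective)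
  have hρsurj : Function.Surjective ρ := T.mkQ_surjective
  obtain ⟨σ, hσ⟩ := Module.projective_lifting_property π LinearMap.id hπsurj
  obtain ⟨τ, hτ⟩ := Module.projective_lifting_property ρ LinearMap.id hρsurj
  have hσ' : ∀ x : F, π (σ x) = x := fun x => congrArg (fun g => g x) hσ
  have hτ' : ∀ x : Q, ρ (τ x) = x := fun x => congrArg (fun g => g x) hτ
  let c := (Module.Free.chooseBasis ℤ F).reindex (Fintype.equivFin _)
  set k := Fintype.card (Module.Free.ChooseBasisIndex ℤ F) with hk
  let b : Fin k → M := fun j => τ (σ (c j))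
  have hkey : ∀ e : Fin k → ℤ, π (ρ (∑ j, e j • b j)) = ∑ j, e j • c j := by
    intro e
    rw [map_sum, map_sum]
    refine Finset.sum_congr rfl fun j _ => ?_
    rw [map_smul, map_smul, hτ', hσ']
  have hind : ∀ e : Fin k → ℤ, (∑ j, e j • c j) = 0 → ∀ j, e j = 0 := by
    intro e he
    have := Fintype.linearIndependent_iff.mp c.linearIndependent e he
    exact this
  have hindb : ∀ e : Fin k → ℤ, ∑ j, e j • b j = 0 → ∀ j, e j = 0 := by
    intro e he j
    exact hind e (by rw [← hkey e, he, map_zero, map_zero]) j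
  refine ⟨k, b, hindb, ?_, ?_⟩
  · -- finite index
    set B : Submodule ℤ M := Submodule.span ℤ (Set.range b) with hB
    set W : Submodule ℤ M := 𝕊 ⊔ B with hW
    set V : Submodule ℤ M := W ⊔ T with hV
    -- image of V in Q
    have hmapT : T.map ρ = ⊥ := by
      rw [eq_bot_iff]
      rintro x ⟨y, hy, rfl⟩
      exact (Submodule.Quotient.mk_eq_zero T).mpr hy
    set Bρ : Submodule ℤ Q := B.map ρ with hBρ
    have hmapV : V.map T.mkQ = Sb ⊔ Bρ := by
      rw [hV, hW, Submodule.map_sup, Submodule.map_sup, hmapT, sup_bot_eq]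
    have hmapSb : Sb.map Sb.mkQ = ⊥ := by
      rw [eq_bot_iff]
      rintro x ⟨y, hy, rfl⟩
      exact (Submodule.Quotient.mk_eq_zero Sb).mpr hy
    set D : Submodule ℤ Q2 := Bρ.map Sb.mkQ with hD
    have hmapSB : (Sb ⊔ Bρ).map Sb.mkQ = D := by
      rw [Submodule.map_sup, hmapSb, bot_sup_eq]
    -- Bρ = span of range (σ ∘ c)
    have hBρ_eq : Bρ = Submodule.span ℤ (Set.range fun j => σ (c j)) := by
      rw [hBρ, hB, Submodule.map_span]
      congr 1
      rw [← Set.range_comp]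
      refine congrArg _ (funext fun j => ?_)
      show ρ (τ (σ (c j))) = σ (c j)
      exact hτ' _
    -- D ⊔ T2 = ⊤
    have hsup : D ⊔ T2 = ⊤ := by
      rw [eq_top_iff]
      rintro z -
      obtain ⟨q, rfl⟩ := Sb.mkQ_surjective z
      have h1 : σ (π q) ∈ Bρ := by
        rw [hBρ_eq]
        have h0 : π q ∈ Submodule.span ℤ (Set.range c) := by rw [c.span_eq]; trivial
        have h0' := Submodule.mem_map_of_mem (f := σ) h0
        rw [Submodule.map_span, ← Set.range_comp] at h0'
        exact h0'
      have h2 : Sb.mkQ (q - σ (π q)) ∈ T2 := by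
        have hker : π (q - σ (π q)) = 0 := by
          rw [map_sub, hσ' (π q), sub_self]
        have : T2.mkQ (Sb.mkQ (q - σ (π q))) = 0 := hker
        exact (Submodule.Quotient.mk_eq_zero T2).mp this
      have : Sb.mkQ q = Sb.mkQ (σ (π q)) + Sb.mkQ (q - σ (π q)) := by
        rw [← map_add]; congr 1; abel
      rw [this]
      exact Submodule.add_mem_sup (Submodule.mem_map_of_mem h1) h2
    -- T2 is finite
    haveI : IsNoetherian ℤ Q2 := isNoetherian_of_isNoetherianRing_of_finite ℤ Q2
    haveI : Module.Finite ℤ T2 := Module.Finite.iff_fg.mpr (IsNoetherian.noetherian T2)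
    haveI hT2fin : Finite T2 := Module.finite_of_fg_torsion _ (Submodule.torsion_isTorsion)
    -- Q2 ⧸ D finite
    have hQ2D : Finite (Q2 ⧸ D) := by
      refine Finite.of_surjective (fun t : T2 => D.mkQ t.val) ?_
      rintro z
      obtain ⟨q, rfl⟩ := D.mkQ_surjective z
      have hq : q ∈ D ⊔ T2 := by rw [hsup]; trivial
      obtain ⟨d, hd, t, ht, rfl⟩ := Submodule.mem_sup.mp hq
      refine ⟨⟨t, ht⟩, ?_⟩
      have hd0 : D.mkQ d = 0 := (Submodule.Quotient.mk_eq_zero D).mpr hd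
      show D.mkQ t = D.mkQ (d + t)
      rw [map_add, hd0, zero_add]
    -- M ⧸ V finite
    have hMV : Finite (M ⧸ V) := by
      have e2 := Submodule.quotientQuotientEquivQuotient Sb (Sb ⊔ Bρ) le_sup_left
      rw [hmapSB] at e2
      have hQSB : Finite (Q ⧸ (Sb ⊔ Bρ)) := Finite.of_equiv _ e2.toEquiv
      have e1 := Submodule.quotientQuotientEquivQuotient T V le_sup_right
      rw [hmapV] at e1
      exact Finite.of_equiv _ e1.toEquiv
    -- additive subgroups
    set Wadd := S ⊔ AddSubgroup.closure (Set.range b) with hWadd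
    have hWeq : (Wadd : Set M) = (W : Set M) := by
      ext x
      constructor
      · intro hx
        obtain ⟨s, hs, t, ht, rfl⟩ := AddSubgroup.mem_sup.mp hx
        refine Submodule.add_mem_sup hs ?_
        rw [← Submodule.span_int_eq_addSubgroupClosure] at ht
        exact ht
      · intro hx
        obtain ⟨s, hs, t, ht, rfl⟩ := Submodule.mem_sup.mp hx
        refine AddSubgroup.add_mem_sup hs ?_
        rw [← Submodule.span_int_eq_addSubgroupClosure]
        exact ht
    set Vadd : AddSubgroup M := V.toAddSubgroup with hVadd
    have hWV : Wadd ≤ Vadd := by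
      intro x hx
      have : x ∈ W := by rw [← SetLike.mem_coe, ← hWeq]; exact hx
      exact le_sup_left (α := Submodule ℤ M) (a := W) (b := T) this
    -- T finite
    haveI : IsNoetherian ℤ M := isNoetherian_of_isNoetherianRing_of_finite ℤ M
    haveI : Module.Finite ℤ T := Module.Finite.iff_fg.mpr (IsNoetherian.noetherian T)
    haveI hTfin : Finite T := Module.finite_of_fg_torsion _ (Submodule.torsion_isTorsion)
    have hVind : Vadd.index ≠ 0 := by
      haveI : Finite (M ⧸ Vadd) := hMV
      exact AddSubgroup.index_ne_zero_of_finite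
    have hrel : Wadd.relIndex Vadd ≠ 0 := by
      haveI : Finite (Vadd ⧸ Wadd.addSubgroupOf Vadd) := by
        refine Finite.of_surjective
          (fun t : T => QuotientAddGroup.mk ⟨t.val, le_sup_right (α := Submodule ℤ M) (a := W) t.2⟩) ?_
        rintro z
        obtain ⟨⟨v, hv⟩, rfl⟩ := QuotientAddGroup.mk_surjective z
        have : v ∈ W ⊔ T := hv
        obtain ⟨w, hw, t, ht, rfl⟩ := Submodule.mem_sup.mp this
        refine ⟨⟨t, ht⟩, ?_⟩
        rw [QuotientAddGroup.eq, AddSubgroup.mem_addSubgroupOf]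
        have heq : -t + (w + t) = w := by abel
        show (-t + (w + t) : M) ∈ Wadd
        rw [heq, ← SetLike.mem_coe, hWeq]
        exact hw
      exact AddSubgroup.index_ne_zero_of_finite
    have hmul := AddSubgroup.relIndex_mul_index hWV
    rw [← hmul]
    exact Nat.mul_ne_zero hrel hVind
  · -- inf bot
    rw [eq_bot_iff]
    rintro x ⟨hx1, hx2⟩
    have hxspan : x ∈ Submodule.span ℤ (Set.range b) := by
      rw [← Submodule.span_int_eq_addSubgroupClosure] at hx1
      exact hx1
    obtain ⟨e, rfl⟩ := mem_span_range_iff_exists_fun ℤ |>.mp hxspan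
    have hmem : π (ρ (∑ j, e j • b j)) = 0 := by
      have h1 : ρ (∑ j, e j • b j) ∈ Sb := ⟨_, hx2, rfl⟩
      have h2 : Sb.mkQ (ρ (∑ j, e j • b j)) = 0 := (Submodule.Quotient.mk_eq_zero Sb).mpr h1
      show T2.mkQ (Sb.mkQ _) = 0
      rw [h2, map_zero]
    rw [hkey e] at hmem
    have he0 : ∀ j, e j = 0 := hind e hmem
    have : ∑ j, e j • b j = (0 : M) := by
      refine Finset.sum_eq_zero fun j _ => by rw [he0 j, zero_smul]
    rw [this]
    exact AddSubgroup.zero_mem ⊥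

theorem myIndexToAdd {A : Type*} [Group A] (T : Subgroup A) :
    (Subgroup.toAddSubgroup T).index = T.index := by
  have e : (A ⧸ T) ≃ (Additive A ⧸ Subgroup.toAddSubgroup T) :=
    Quotient.congr Additive.ofMul (fun a b => by
      rw [QuotientGroup.leftRel_apply, QuotientAddGroup.leftRel_apply]
      rfl)
  show Nat.card _ = Nat.card _
  exact (Nat.card_congr e).symm

theorem myClosureToAdd {A : Type*} [Group A] (s : Set A) :
    Subgroup.toAddSubgroup (Subgroup.closure s) = AddSubgroup.closure (Additive.ofMul '' s) := by
  apply le_antisymm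
  · intro x hx
    have hx' : Additive.toMul x ∈ Subgroup.closure s := hx
    refine Subgroup.closure_induction
      (p := fun y _ => Additive.ofMul y ∈ AddSubgroup.closure (Additive.ofMul '' s))
      (fun y hy => AddSubgroup.subset_closure ⟨y, hy, rfl⟩)
      (AddSubgroup.zero_mem _)
      (fun y z _ _ hy hz => AddSubgroup.add_mem _ hy hz)
      (fun y _ hy => AddSubgroup.neg_mem _ hy) hx'
  · rw [AddSubgroup.closure_le]
    rintro x ⟨y, hy, rfl⟩
    exact Subgroup.subset_closure (G := A) hy

theorem myAbelianCoreMul {A : Type*} [CommGroup A] [Group.FG A] (S : Subgroup A) :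
    ∃ (k : ℕ) (b : Fin k → A),
      (∀ e : Fin k → ℤ, (∏ j, b j ^ e j) = 1 → ∀ j, e j = 0) ∧
      (S ⊔ Subgroup.closure (Set.range b)).index ≠ 0 ∧
      Subgroup.closure (Set.range b) ⊓ S = ⊥ := by
  obtain ⟨k, badd, hind, hidx, hinf⟩ := myAbelianCoreAdd (M := Additive A) (Subgroup.toAddSubgroup S)
  have hset : Additive.ofMul '' (Set.range fun j => Additive.toMul (badd j)) = Set.range badd := by
    rw [← Set.range_comp]
    congr 1
  have hclos := myClosureToAdd (s := Set.range fun j => Additive.toMul (badd j))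
  rw [hset] at hclos
  refine ⟨k, fun j => Additive.toMul (badd j), ?_, ?_, ?_⟩
  · intro e he j
    refine hind e ?_ j
    have h1 : Additive.ofMul (∏ j, Additive.toMul (badd j) ^ e j) = ∑ j, e j • badd j := by
      rw [ofMul_prod]
      refine Finset.sum_congr rfl fun j _ => ?_
      rw [ofMul_zpow]
      rfl
    rw [he] at h1
    rw [← h1]
    rfl
  · rw [← myIndexToAdd, map_sup, hclos]
    exact hidx
  · apply Subgroup.toAddSubgroup.injective
    rw [map_inf, hclos, map_bot]
    exact hinf


theorem myMemSupOfCommute {G : Type*} [Group G] {A B : Subgroup G}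
    (hcomm : ∀ a ∈ A, ∀ b ∈ B, a * b = b * a) :
    ∀ x ∈ A ⊔ B, ∃ a ∈ A, ∃ b ∈ B, x = a * b := by
  intro x hx
  rw [← Subgroup.closure_eq A, ← Subgroup.closure_eq B, ← Subgroup.closure_union] at hx
  refine Subgroup.closure_induction (p := fun y _ => ∃ a ∈ A, ∃ b ∈ B, y = a * b) ?_ ?_ ?_ ?_ hx
  · rintro y (hy | hy)
    · exact ⟨y, hy, 1, B.one_mem, (mul_one y).symm⟩
    · exact ⟨1, A.one_mem, y, hy, (one_mul y).symm⟩
  · exact ⟨1, A.one_mem, 1, B.one_mem, (mul_one 1).symm⟩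
  · rintro y z _ _ ⟨a, ha, b, hb, rfl⟩ ⟨a', ha', b', hb', rfl⟩
    refine ⟨a * a', A.mul_mem ha ha', b * b', B.mul_mem hb hb', ?_⟩
    have hc : b * a' = a' * b := (hcomm a' ha' b hb).symm
    calc a * b * (a' * b') = a * (b * a') * b' := by simp [mul_assoc]
      _ = a * (a' * b) * b' := by rw [hc]
      _ = a * a' * (b * b') := by simp [mul_assoc]
  · rintro y _ ⟨a, ha, b, hb, rfl⟩
    refine ⟨a⁻¹, A.inv_mem ha, b⁻¹, B.inv_mem hb, ?_⟩
    rw [mul_inv_rev, hcomm a⁻¹ (A.inv_mem ha) b⁻¹ (B.inv_mem hb)]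

theorem myRelindexOfCover {G : Type*} [Group G] {H J : Subgroup G} (T : Set G) (hfin : T.Finite)
    (hTJ : ∀ t ∈ T, t ∈ J) (hcov : ∀ x ∈ J, ∃ t ∈ T, t⁻¹ * x ∈ H) :
    H.relIndex J ≠ 0 := by
  haveI : Finite T := hfin
  haveI : Finite (↥J ⧸ H.subgroupOf J) := by
    refine Finite.of_surjective (fun t : T => QuotientGroup.mk ⟨t.val, hTJ t t.2⟩) ?_
    rintro q
    obtain ⟨⟨x, hxJ⟩, rfl⟩ := QuotientGroup.mk_surjective q
    obtain ⟨t, ht, hmem⟩ := hcov x hxJ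
    refine ⟨⟨t, ht⟩, ?_⟩
    rw [QuotientGroup.eq]
    exact Subgroup.mem_subgroupOf.mpr hmem
  exact Subgroup.index_ne_zero_of_finite

theorem myClosureIsCommutative {G : Type*} [Group G] {s : Set G}
    (h : ∀ a ∈ s, ∀ b ∈ s, Commute a b) : IsMulCommutative ↥(Subgroup.closure s) := by
  have step : ∀ x ∈ Subgroup.closure s, ∀ b ∈ s, Commute x b := by
    intro x hx
    refine Subgroup.closure_induction (p := fun y _ => ∀ b ∈ s, Commute y b) h
      (fun b _ => Commute.one_left b)
      (fun y z _ _ hy hz b hb => Commute.mul_left (hy b hb) (hz b hb))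
      (fun y _ hy b hb => (hy b hb).inv_left) hx
  have step2 : ∀ x ∈ Subgroup.closure s, ∀ y ∈ Subgroup.closure s, Commute x y := by
    intro x hx y hy
    refine Subgroup.closure_induction (p := fun z _ => Commute x z)
      (fun b hb => step x hx b hb)
      (Commute.one_right x)
      (fun y z _ _ h1 h2 => Commute.mul_right h1 h2)
      (fun y _ h1 => h1.inv_right) hy
  exact ⟨⟨fun a b => Subtype.ext (step2 a.1 a.2 b.1 b.2)⟩⟩

theorem mySubgroupOfCenter {G : Type*} [Group G] (K : Subgroup G) :
    (K ⊓ Subgroup.centralizer (K : Set G)).subgroupOf K = Subgroup.center K := by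
  ext x
  rw [Subgroup.mem_subgroupOf, Subgroup.mem_center_iff]
  constructor
  · rintro ⟨-, hc⟩ g
    exact Subtype.ext (Subgroup.mem_centralizer_iff.mp hc g.1 g.2)
  · intro hc
    refine ⟨x.2, Subgroup.mem_centralizer_iff.mpr fun h hh => ?_⟩
    exact congrArg Subtype.val (hc ⟨h, hh⟩)


theorem myCommutatorSetFinite {H : Type*} [Group H] (h : FiniteByAbelian H) :
    Finite (commutatorSet H) := by
  obtain ⟨N, _, hfin, hcomm⟩ := h
  have hsub : (commutatorSet H) ⊆ (N : Set H) := by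
    rintro x ⟨a, b, rfl⟩
    simpa [commutatorElement_def, mul_assoc] using hcomm a b
  haveI : Finite ↥(N : Set H) := hfin
  exact (Set.Finite.subset (Set.toFinite _) hsub).to_subtype

theorem myCenterTransfer {G : Type*} [Group G] (K : Subgroup G) (hfg : Group.FG ↥K)
    (hfba : FiniteByAbelian ↥K) :
    (K ⊓ Subgroup.centralizer (K : Set G)).relIndex K ≠ 0 := by
  haveI := hfg
  haveI : Finite (commutatorSet ↥K) := myCommutatorSetFinite hfba
  haveI := Subgroup.finiteIndex_center (G := ↥K)
  rw [Subgroup.relIndex, mySubgroupOfCenter]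
  exact Subgroup.FiniteIndex.index_ne_zero

theorem myAcomm {G : Type*} [Group G] (K : Subgroup G) :
    IsMulCommutative ↥(K ⊓ Subgroup.centralizer (K : Set G)) := by
  constructor; constructor
  rintro ⟨a, haK, hac⟩ ⟨b, hbK, hbc⟩
  apply Subtype.ext
  show a * b = b * a
  exact (Subgroup.mem_centralizer_iff.mp hac b hbK).symm

theorem myFGofRelindex {G : Type*} [Group G] (A K : Subgroup G) (hle : A ≤ K)
    (hfg : Group.FG ↥K) (h : A.relIndex K ≠ 0) : Group.FG ↥A := by
  haveI := hfg
  haveI : (A.subgroupOf K).FiniteIndex := ⟨h⟩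
  haveI : Group.FG ↥(A.subgroupOf K) := Subgroup.fg_of_index_ne_zero _
  exact Group.fg_of_surjective (f := (Subgroup.subgroupOfEquivOfLe hle).toMonoidHom)
    (Subgroup.subgroupOfEquivOfLe hle).surjective


section Defs

variable {G : Type*} [Group G]

def myK (e : ℕ → G) (n : ℕ) : Subgroup G := Subgroup.closure (e '' Set.Iio n)

theorem myK_fg (e : ℕ → G) (n : ℕ) : Group.FG ↥(myK e n) := by
  rw [Group.fg_iff_subgroup_fg]
  exact Subgroup.fg_iff _ |>.mpr ⟨e '' Set.Iio n, rfl, (Set.finite_Iio n).image e⟩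

theorem myK_mono (e : ℕ → G) {m n : ℕ} (h : m ≤ n) : myK e m ≤ myK e n :=
  Subgroup.closure_mono (Set.image_mono (fun _ hx => lt_of_lt_of_le hx h))

def myHup (f : ℕ → List G) (n : ℕ) : Subgroup G :=
  Subgroup.closure {g | ∃ m, m < n ∧ g ∈ f m}

def myBB (f : ℕ → List G) (m j : ℕ) : G := (f m).getD j 1

def myInner (f : ℕ → List G) (E : ℕ → ℕ → ℤ) (m : ℕ) : G :=
  ((List.range (f m).length).map (fun j => myBB f m j ^ E m j)).prod

def myProd (f : ℕ → List G) (E : ℕ → ℕ → ℤ) (n : ℕ) : G :=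
  ((List.range n).map (myInner f E)).prod

theorem myProd_succ (f : ℕ → List G) (E : ℕ → ℕ → ℤ) (n : ℕ) :
    myProd f E (n+1) = myProd f E n * myInner f E n := by
  unfold myProd
  rw [List.range_succ, List.map_append, List.prod_append]
  simp

def myPP (e : ℕ → G) (f : ℕ → List G) (n : ℕ) : Prop :=
  (∀ m, m < n → ∀ g ∈ f m, g ∈ myK e (m+1) ⊓ Subgroup.centralizer (myK e m : Set G)) ∧
  (∀ m, m ≤ n → (myHup f m).relIndex (myK e m) ≠ 0) ∧
  (∀ E : ℕ → ℕ → ℤ, myProd f E n = 1 →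
    ∀ m, m < n → ∀ j, j < (f m).length → E m j = 0) ∧
  (∀ m, m < n → ∀ g ∈ f m, ∀ g' ∈ f m, Commute g g')

theorem myHup_congr {f g : ℕ → List G} (n : ℕ) (h : ∀ m, m < n → f m = g m) :
    myHup f n = myHup g n := by
  unfold myHup
  congr 1
  ext x
  constructor
  · rintro ⟨m, hm, hx⟩; exact ⟨m, hm, (h m hm) ▸ hx⟩
  · rintro ⟨m, hm, hx⟩; exact ⟨m, hm, (h m hm).symm ▸ hx⟩

theorem myPP_congr (e : ℕ → G) {f g : ℕ → List G} (n : ℕ) (h : ∀ m, m < n → f m = g m)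
    (hf : myPP e f n) : myPP e g n := by
  obtain ⟨h1, h2, h3, h4⟩ := hf
  refine ⟨?_, ?_, ?_, ?_⟩
  · intro m hm x hx
    exact h1 m hm x ((h m hm).symm ▸ hx)
  · intro m hm
    rw [← myHup_congr m (fun m' hm' => h m' (lt_of_lt_of_le hm' hm))]
    exact h2 m hm
  · intro E hE
    have hEq : myProd f E n = myProd g E n := by
      unfold myProd
      congr 1
      refine List.map_congr_left fun m hm => ?_
      unfold myInner myBB
      rw [show f m = g m from h m (List.mem_range.mp hm)]
    intro m hm j hj
    exact h3 E (by rw [hEq]; exact hE) m hm j (by rw [h m hm]; exact hj)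
  · intro m hm x hx y hy
    exact h4 m hm x ((h m hm).symm ▸ hx) y ((h m hm).symm ▸ hy)

theorem myPP_zero (e : ℕ → G) (f : ℕ → List G) : myPP e f 0 := by
  refine ⟨fun m hm => absurd hm (Nat.not_lt_zero m), ?_, ?_, fun m hm => absurd hm (Nat.not_lt_zero m)⟩
  · intro m hm
    interval_cases m
    have hK0 : myK e 0 = ⊥ := by
      unfold myK
      have : e '' Set.Iio 0 = ∅ := by
        ext x; simp
      rw [this, Subgroup.closure_empty]
    rw [hK0, Subgroup.relIndex_bot_right]
    exact one_ne_zero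
  · intro E hE m hm
    exact absurd hm (Nat.not_lt_zero m)

end Defs

section Step

variable {G : Type*} [Group G]

theorem myProdRangeComm {M : Type*} [CommMonoid M] (g : ℕ → M) (n : ℕ) :
    ((List.range n).map g).prod = ∏ m ∈ Finset.range n, g m := by
  induction n with
  | zero => simp
  | succ n ih => rw [List.range_succ, List.map_append, List.prod_append,
      Finset.prod_range_succ, ih]; simp

theorem myRelindexMapSubtype {G : Type*} [Group G] (A : Subgroup G) (Y : Subgroup ↥A) :
    (Subgroup.map A.subtype Y).relIndex A = Y.index := by
  show ((Y.map A.subtype).subgroupOf A).index = Y.index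
  rw [← Subgroup.comap_subtype, Subgroup.comap_map_eq_self_of_injective A.subtype_injective]

theorem myStep (hG : LocallyFiniteByAbelian G) (e : ℕ → G) (f : ℕ → List G) (n : ℕ)
    (hPP : myPP e f n) : ∃ l : List G, myPP e (Function.update f n l) (n + 1) := by
  classical
  set Kn : Subgroup G := myK e n with hKn
  set Kn1 : Subgroup G := myK e (n+1) with hKn1
  have hfgKn1 : Group.FG ↥Kn1 := myK_fg e (n+1)
  have hfba : FiniteByAbelian ↥Kn1 := hG Kn1 hfgKn1
  set A : Subgroup G := Kn1 ⊓ Subgroup.centralizer (Kn1 : Set G) with hA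
  have hArel : A.relIndex Kn1 ≠ 0 := myCenterTransfer Kn1 hfgKn1 hfba
  haveI : IsMulCommutative ↥A := myAcomm Kn1
  letI : CommGroup ↥A := by open scoped IsMulCommutative in exact inferInstance
  haveI : Group.FG ↥A := myFGofRelindex A Kn1 inf_le_left hfgKn1 hArel
  set Sprev : Subgroup G := myHup f n with hSprev
  set S : Subgroup ↥A := (Sprev ⊓ A).subgroupOf A with hS
  obtain ⟨k, bA, hind, hidx, hinf⟩ := myAbelianCoreMul S
  set l : List G := List.ofFn (fun j => (bA j : G)) with hl
  have hflen : (Function.update f n l n).length = k := by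
    rw [Function.update_self, hl, List.length_ofFn]
  refine ⟨l, ?_, ?_, ?_, ?_⟩
  · -- C1
    intro m hm x hx
    rcases Nat.lt_succ_iff_lt_or_eq.mp hm with hm' | rfl
    · rw [Function.update_of_ne (Nat.ne_of_lt hm')] at hx
      exact hPP.1 m hm' x hx
    · rw [Function.update_self] at hx
      obtain ⟨j, rfl⟩ := List.mem_ofFn.mp hx
      have hmem := Subgroup.mem_inf.mp ((bA j).2 : (bA j : G) ∈ A)
      refine ⟨hmem.1, ?_⟩
      refine Subgroup.centralizer_le ?_ hmem.2
      intro z hz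
      exact myK_mono e (Nat.le_succ m) hz
  · -- C2
    intro m hm
    rcases eq_or_lt_of_le hm with rfl | hm'
    · -- m = n + 1
      set f' := Function.update f n l with hf'
      have hclosmap : Subgroup.closure (Set.range (fun j => (bA j : G))) =
          Subgroup.map A.subtype (Subgroup.closure (Set.range bA)) := by
        rw [MonoidHom.map_closure, ← Set.range_comp]
        rfl
      have hHsplit : myHup f' (n+1) = Sprev ⊔
          Subgroup.map A.subtype (Subgroup.closure (Set.range bA)) := by
        have hset : {g | ∃ m', m' < n+1 ∧ g ∈ f' m'} =
            {g | ∃ m', m' < n ∧ g ∈ f m'} ∪ Set.range (fun j => (bA j : G)) := by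
          ext x
          constructor
          · rintro ⟨m', hm', hx⟩
            rcases Nat.lt_succ_iff_lt_or_eq.mp hm' with h1 | rfl
            · exact Or.inl ⟨m', h1, by
                rwa [hf', Function.update_of_ne (Nat.ne_of_lt h1)] at hx⟩
            · refine Or.inr ?_
              rw [hf', Function.update_self] at hx
              exact List.mem_ofFn.mp hx
          · rintro (⟨m', hm', hx⟩ | hx)
            · exact ⟨m', Nat.lt_succ_of_lt hm', by
                rwa [hf', Function.update_of_ne (Nat.ne_of_lt hm')]⟩
            · exact ⟨n, Nat.lt_succ_self n, by
                rw [hf', Function.update_self]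
                exact List.mem_ofFn.mpr hx⟩
        unfold myHup
        rw [hset, Subgroup.closure_union, hclosmap]
        rfl
      set Bmap := Subgroup.map A.subtype (Subgroup.closure (Set.range bA)) with hBmap
      set X : Subgroup G := (Sprev ⊓ A) ⊔ Bmap with hX
      have hXA : X ≤ A := sup_le inf_le_right (Subgroup.map_subtype_le _)
      have hXH : X ≤ myHup f' (n+1) := by
        rw [hHsplit]
        exact sup_le (le_trans inf_le_left le_sup_left) le_sup_right
      have hXmap : X = Subgroup.map A.subtype (S ⊔ Subgroup.closure (Set.range bA)) := by
        rw [Subgroup.map_sup, hS, Subgroup.subgroupOf_map_subtype, hX, hBmap]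
        congr 1
        rw [inf_assoc, inf_idem]
      have hrelXA : X.relIndex A = (S ⊔ Subgroup.closure (Set.range bA)).index := by
        rw [hXmap, myRelindexMapSubtype]
      have hrelX : X.relIndex Kn1 ≠ 0 := by
        rw [← Subgroup.relIndex_mul_relIndex X A Kn1 hXA inf_le_left]
        exact Nat.mul_ne_zero (by rw [hrelXA]; exact hidx) hArel
      have hdvd := Subgroup.relIndex_dvd_of_le_left Kn1 hXH
      intro h0
      exact hrelX (zero_dvd_iff.mp (h0 ▸ hdvd))
    · -- m ≤ n
      have hm'' : m ≤ n := Nat.lt_succ_iff.mp hm'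
      have hcongr : myHup (Function.update f n l) m = myHup f m :=
        myHup_congr m (fun m' hm3 => Function.update_of_ne (show m' ≠ n by omega) l f)
      rw [hcongr]
      exact hPP.2.1 m hm''
  · -- C3
    intro E hE
    rw [myProd_succ] at hE
    have hPold : myProd (Function.update f n l) E n = myProd f E n := by
      unfold myProd
      congr 1
      refine List.map_congr_left fun m hm => ?_
      unfold myInner myBB
      rw [Function.update_of_ne (Nat.ne_of_lt (List.mem_range.mp hm))]
    set y : ↥A := ∏ j : Fin k, bA j ^ E n (j : ℕ) with hy
    set gA : ℕ → ↥A := (fun j => if h : j < k then bA ⟨j, h⟩ ^ E n j else 1) with hgA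
    have hInner : myInner (Function.update f n l) E n = (y : G) := by
      have h1 : y = ((List.range k).map gA).prod := by
        rw [myProdRangeComm, hy, ← Fin.prod_univ_eq_prod_range gA k]
        refine Finset.prod_congr rfl fun i _ => ?_
        rw [hgA]
        simp only [Fin.is_lt, dif_pos, Fin.eta]
      have h2 : (y : G) = ((List.range k).map (fun j => ((gA j : G)))).prod := by
        rw [h1]
        have h3 := A.subtype.map_list_prod (List.map gA (List.range k))
        rw [List.map_map] at h3
        exact h3
      rw [h2]
      unfold myInner
      rw [hflen]
      congr 1
      refine (List.map_congr_left fun j hj => ?_).symm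
      have hjk : j < k := List.mem_range.mp hj
      unfold myBB
      rw [Function.update_self, hl, List.getD_eq_getElem _ _ (by
        rw [List.length_ofFn]; exact hjk), List.getElem_ofFn]
      rw [hgA]
      simp only [hjk, dif_pos]
      rw [SubgroupClass.coe_zpow]
    rw [hPold, hInner] at hE
    have hyclos : y ∈ Subgroup.closure (Set.range bA) := by
      rw [hy]
      refine Subgroup.prod_mem _ fun i _ => ?_
      exact Subgroup.zpow_mem _ (Subgroup.subset_closure (Set.mem_range_self i)) _
    have hPmem : myProd f E n ∈ Sprev := by
      unfold myProd
      refine Subgroup.list_prod_mem _ fun x hx => ?_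
      obtain ⟨m, hm, rfl⟩ := List.mem_map.mp hx
      unfold myInner
      refine Subgroup.list_prod_mem _ fun z hz => ?_
      obtain ⟨j, hj, rfl⟩ := List.mem_map.mp hz
      refine Subgroup.zpow_mem _ (Subgroup.subset_closure ?_) _
      refine ⟨m, List.mem_range.mp hm, ?_⟩
      unfold myBB
      rw [List.getD_eq_getElem _ _ (List.mem_range.mp hj)]
      exact List.getElem_mem _
    have hyS : (y : G) ∈ Sprev := by
      have heq : (y : G) = (myProd f E n)⁻¹ := eq_inv_of_mul_eq_one_right hE
      rw [heq]
      exact Sprev.inv_mem hPmem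
    have hymem : y ∈ Subgroup.closure (Set.range bA) ⊓ S :=
      ⟨hyclos, Subgroup.mem_subgroupOf.mpr ⟨hyS, SetLike.coe_mem y⟩⟩
    rw [hinf] at hymem
    have hy1 : y = 1 := hymem
    have hP1 : myProd f E n = 1 := by
      rw [hy1] at hE
      simpa using hE
    intro m hm j hj
    rcases Nat.lt_succ_iff_lt_or_eq.mp hm with hm' | rfl
    · exact hPP.2.2.1 E hP1 m hm' j (by
        rwa [Function.update_of_ne (Nat.ne_of_lt hm')] at hj)
    · have hjk : j < k := by rwa [hflen] at hj
      have := hind (fun i => E m (i : ℕ)) hy1 ⟨j, hjk⟩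
      exact this
  · -- C4
    intro m hm x hx z hz
    rcases Nat.lt_succ_iff_lt_or_eq.mp hm with hm' | rfl
    · rw [Function.update_of_ne (Nat.ne_of_lt hm')] at hx hz
      exact hPP.2.2.2 m hm' x hx z hz
    · rw [Function.update_self] at hx hz
      obtain ⟨j, rfl⟩ := List.mem_ofFn.mp hx
      obtain ⟨j', rfl⟩ := List.mem_ofFn.mp hz
      exact Subgroup.mul_comm_of_mem_isMulCommutative (H := A) (bA j).2 (bA j').2

end Step

section Build

variable {G : Type*} [Group G]

noncomputable def mySt (hG : LocallyFiniteByAbelian G) (e : ℕ → G) :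
    (n : ℕ) → {f : ℕ → List G // myPP e f n}
  | 0 => ⟨fun _ => [], myPP_zero e _⟩
  | n+1 =>
    ⟨Function.update (mySt hG e n).1 n
        (Classical.choose (myStep hG e (mySt hG e n).1 n (mySt hG e n).2)),
     Classical.choose_spec (myStep hG e (mySt hG e n).1 n (mySt hG e n).2)⟩

noncomputable def myBlk (hG : LocallyFiniteByAbelian G) (e : ℕ → G) (n : ℕ) : List G :=
  (mySt hG e (n+1)).1 n

theorem mySt_eq (hG : LocallyFiniteByAbelian G) (e : ℕ → G) :
    ∀ n m, m < n → (mySt hG e n).1 m = myBlk hG e m := by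
  intro n
  induction n with
  | zero => exact fun m hm => absurd hm (Nat.not_lt_zero m)
  | succ n ih =>
    intro m hm
    rcases Nat.lt_succ_iff_lt_or_eq.mp hm with h1 | rfl
    · show Function.update (mySt hG e n).1 n _ m = _
      rw [Function.update_of_ne (Nat.ne_of_lt h1)]
      exact ih m h1
    · rfl

theorem myPP_blk (hG : LocallyFiniteByAbelian G) (e : ℕ → G) (n : ℕ) :
    myPP e (myBlk hG e) n :=
  myPP_congr e n (fun m hm => mySt_eq hG e n m hm) (mySt hG e n).2

end Build


/-- Every countable locally finite-by-abelian group `G` contains a free abelian subgroup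
`H` of locally finite index in `G` with `Q(H) = G`. -/
theorem exists_free_abelian_subgroup_of_locallyFiniteByAbelian
    (G : Type) [Group G] [Countable G] (hG : LocallyFiniteByAbelian G) :
    ∃ H : Subgroup G, (∃ ι : Type, Nonempty (H ≃* Multiplicative (ι →₀ ℤ))) ∧
      LocallyFiniteIndex H ∧ quasiCentralizer (H : Set G) = Set.univ := by
  classical
  haveI : Nonempty G := ⟨1⟩
  obtain ⟨e, he⟩ := exists_surjective_nat G
  set f : ℕ → List G := myBlk hG e with hf
  have hPP : ∀ n, myPP e f n := fun n => myPP_blk hG e n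
  set H : Subgroup G := Subgroup.closure {g | ∃ m, g ∈ f m} with hH
  set Lg : ℕ → Subgroup G := fun n => Subgroup.closure {g | ∃ m, n ≤ m ∧ g ∈ f m} with hLg
  -- K covers G
  have hKcover : ∀ g : G, ∃ n, g ∈ myK e n := by
    intro g
    obtain ⟨m, rfl⟩ := he g
    exact ⟨m+1, Subgroup.subset_closure ⟨m, Nat.lt_succ_self m, rfl⟩⟩
  -- Hup n ≤ K n
  have hHupK : ∀ n, myHup f n ≤ myK e n := by
    intro n
    rw [myHup, Subgroup.closure_le]
    rintro x ⟨m, hm, hx⟩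
    exact myK_mono e (Nat.succ_le_of_lt hm) ((hPP n).1 m hm x hx).1
  -- H splits
  have hHsplit : ∀ n, H = myHup f n ⊔ Lg n := by
    intro n
    rw [hH, myHup, hLg]
    rw [← Subgroup.closure_union]
    congr 1
    ext x
    constructor
    · rintro ⟨m, hx⟩
      rcases lt_or_ge m n with h1 | h1
      · exact Or.inl ⟨m, h1, hx⟩
      · exact Or.inr ⟨m, h1, hx⟩
    · rintro (⟨m, _, hx⟩ | ⟨m, _, hx⟩) <;> exact ⟨m, hx⟩
  -- Lg n centralizes K n
  have hLcent : ∀ n, Lg n ≤ Subgroup.centralizer (myK e n : Set G) := by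
    intro n
    rw [hLg, Subgroup.closure_le]
    rintro x ⟨m, hm, hx⟩
    have := ((hPP (m+1)).1 m (Nat.lt_succ_self m) x hx).2
    exact Subgroup.centralizer_le (fun z hz => myK_mono e hm hz) this
  have hHupH : ∀ n, myHup f n ≤ H := by
    intro n
    rw [myHup, hH]
    exact Subgroup.closure_mono (by rintro x ⟨m, _, hx⟩; exact ⟨m, hx⟩)
  have hLgH : ∀ n, Lg n ≤ H := by
    intro n
    rw [hLg, hH]
    exact Subgroup.closure_mono (by rintro x ⟨m, _, hx⟩; exact ⟨m, hx⟩)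
  have hcommHL : ∀ n, ∀ a ∈ myHup f n, ∀ b ∈ Lg n, a * b = b * a := by
    intro n a ha b hb
    exact Subgroup.mem_centralizer_iff.mp (hLcent n hb) a (hHupK n ha)
  refine ⟨H, ?_, ?_, ?_⟩
  · -- free abelian
    have hcommGen : ∀ a ∈ {g | ∃ m, g ∈ f m}, ∀ b ∈ {g | ∃ m, g ∈ f m}, Commute a b := by
      rintro a ⟨m1, ha⟩ b ⟨m2, hb⟩
      rcases lt_trichotomy m1 m2 with h | h | h
      · have haK : a ∈ myK e m2 :=
          myK_mono e (Nat.succ_le_of_lt h) ((hPP (m1+1)).1 m1 (Nat.lt_succ_self m1) a ha).1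
        have hbc := ((hPP (m2+1)).1 m2 (Nat.lt_succ_self m2) b hb).2
        exact Subgroup.mem_centralizer_iff.mp hbc a haK
      · subst h
        exact (hPP (m1+1)).2.2.2 m1 (Nat.lt_succ_self m1) a ha b hb
      · have hbK : b ∈ myK e m1 :=
          myK_mono e (Nat.succ_le_of_lt h) ((hPP (m2+1)).1 m2 (Nat.lt_succ_self m2) b hb).1
        have hac := ((hPP (m1+1)).1 m1 (Nat.lt_succ_self m1) a ha).2
        exact (Subgroup.mem_centralizer_iff.mp hac b hbK).symm
    haveI hHcomm : IsMulCommutative ↥H := by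
      have := myClosureIsCommutative hcommGen
      rwa [← hH] at this
    letI : CommGroup ↥H := by open scoped IsMulCommutative in exact inferInstance
    refine ⟨(n : ℕ) × Fin ((f n).length), ?_⟩
    have heltmem : ∀ i : (n : ℕ) × Fin ((f n).length), myBB f i.1 i.2 ∈ H := by
      rintro ⟨m, j⟩
      rw [hH]
      refine Subgroup.subset_closure ⟨m, ?_⟩
      show (f m).getD j 1 ∈ f m
      rw [List.getD_eq_getElem _ _ j.isLt]
      exact List.getElem_mem _
    set elt : ((n : ℕ) × Fin ((f n).length)) → ↥H := fun i => ⟨myBB f i.1 i.2, heltmem i⟩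
      with helt
    set F0 : (((n : ℕ) × Fin ((f n).length)) →₀ ℤ) →+ Additive ↥H :=
      Finsupp.liftAddHom (fun i => (zmultiplesHom (Additive ↥H)) (Additive.ofMul (elt i)))
      with hF0
    set myphi : Multiplicative (((n : ℕ) × Fin ((f n).length)) →₀ ℤ) →* ↥H :=
      AddMonoidHom.toMultiplicativeLeft F0 with hphi
    have hφsingle : ∀ i, myphi (Multiplicative.ofAdd (Finsupp.single i 1)) = elt i := by
      intro i
      show Additive.toMul (F0 (Finsupp.single i 1)) = elt i
      rw [hF0, Finsupp.liftAddHom_apply_single]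
      show Additive.toMul ((1 : ℤ) • Additive.ofMul (elt i)) = elt i
      rw [one_smul]
      rfl
    have hsurj : Function.Surjective myphi := by
      rintro ⟨x, hx⟩
      have hx' : x ∈ Subgroup.closure {g | ∃ m, g ∈ f m} := by rw [← hH]; exact hx
      have key : ∃ g, ((myphi g : ↥H) : G) = x := by
        refine Subgroup.closure_induction
          (p := fun y _ => ∃ g, ((myphi g : ↥H) : G) = y) ?_ ?_ ?_ ?_ hx'
        · rintro y ⟨m, hy⟩
          obtain ⟨idx, hidx, rfl⟩ := List.mem_iff_getElem.mp hy
          refine ⟨Multiplicative.ofAdd (Finsupp.single ⟨m, ⟨idx, hidx⟩⟩ 1), ?_⟩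
          rw [hφsingle]
          show myBB f m idx = (f m)[idx]
          unfold myBB
          rw [List.getD_eq_getElem _ _ hidx]
        · exact ⟨1, by rw [map_one]; rfl⟩
        · rintro y z _ _ ⟨g1, hg1⟩ ⟨g2, hg2⟩
          exact ⟨g1 * g2, by rw [map_mul, MulMemClass.coe_mul, hg1, hg2]⟩
        · rintro y _ ⟨g1, hg1⟩
          exact ⟨g1⁻¹, by rw [map_inv, InvMemClass.coe_inv, hg1]⟩
      obtain ⟨g, hg⟩ := key
      exact ⟨g, Subtype.ext hg⟩
    have hinj : Function.Injective myphi := by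
      refine (injective_iff_map_eq_one myphi).mpr ?_
      intro g hg
      set g' : ((n : ℕ) × Fin ((f n).length)) →₀ ℤ := Multiplicative.toAdd g with hg'
      set N : ℕ := (g'.support.sup (fun i => i.1)) + 1 with hN
      have hsupN : ∀ i ∈ g'.support, i.1 < N := fun i hi =>
        Nat.lt_succ_of_le (Finset.le_sup (f := fun i => i.1) hi)
      set s : Finset ((n : ℕ) × Fin ((f n).length)) :=
        (Finset.range N).sigma (fun n => Finset.univ) with hs
      have hsub : g'.support ⊆ s := by
        intro i hi
        rw [hs, Finset.mem_sigma]
        exact ⟨Finset.mem_range.mpr (hsupN i hi), Finset.mem_univ _⟩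
      have hφg : myphi g = g'.prod (fun i z => elt i ^ z) := by
        show Additive.toMul (F0 g') = _
        have hofMul : Additive.ofMul (g'.prod fun i z => elt i ^ z)
            = g'.sum fun i z => (zmultiplesHom (Additive ↥H)) (Additive.ofMul (elt i)) z := by
          rw [Finsupp.prod, Finsupp.sum, ofMul_prod]
          refine Finset.sum_congr rfl fun i _ => ?_
          rw [ofMul_zpow]
          rfl
        rw [hF0, Finsupp.liftAddHom_apply, ← hofMul]
        rfl
      have hP1 : g'.prod (fun i z => elt i ^ z) = 1 := by rw [← hφg]; exact hg
      have hPs : (∏ i ∈ s, elt i ^ g' i) = 1 := by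
        rw [← Finsupp.prod_of_support_subset g' hsub _ (fun i _ => zpow_zero _)]
        exact hP1
      set E : ℕ → ℕ → ℤ :=
        fun m j => if h : j < (f m).length then g' ⟨m, ⟨j, h⟩⟩ else 0 with hE
      set gHin : (m : ℕ) → ℕ → ↥H := fun m j =>
        if h : j < (f m).length then elt ⟨m, ⟨j, h⟩⟩ ^ g' ⟨m, ⟨j, h⟩⟩ else 1 with hgHin
      set gH : ℕ → ↥H := fun m => ((List.range ((f m).length)).map (gHin m)).prod with hgH
      have hstep1 : (∏ i ∈ s, elt i ^ g' i) = ((List.range N).map gH).prod := by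
        rw [hs, Finset.prod_sigma, myProdRangeComm]
        refine Finset.prod_congr rfl fun m _ => ?_
        show _ = ((List.range ((f m).length)).map (gHin m)).prod
        rw [myProdRangeComm, ← Fin.prod_univ_eq_prod_range (gHin m) ((f m).length)]
        refine Finset.prod_congr rfl fun j _ => ?_
        rw [hgHin]
        simp only [Fin.is_lt, dif_pos, Fin.eta]
      have hstep2 : ((((List.range N).map gH).prod : ↥H) : G) = myProd f E N := by
        have h3 := H.subtype.map_list_prod (List.map gH (List.range N))
        rw [List.map_map] at h3
        refine h3.trans ?_
        unfold myProd
        congr 1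
        refine List.map_congr_left fun m _ => ?_
        show ((gH m : ↥H) : G) = myInner f E m
        have h4 := H.subtype.map_list_prod (List.map (gHin m) (List.range ((f m).length)))
        rw [List.map_map] at h4
        refine h4.trans ?_
        unfold myInner
        congr 1
        refine List.map_congr_left fun j hj => ?_
        have hjk : j < (f m).length := List.mem_range.mp hj
        show ((gHin m j : ↥H) : G) = myBB f m j ^ E m j
        rw [hgHin, hE]
        simp only [hjk, dif_pos]
        try rw [SubgroupClass.coe_zpow]
        try rfl
      have hprod1 : myProd f E N = 1 := by
        rw [← hstep2, ← hstep1, hPs]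
        rfl
      have hE0 := (hPP N).2.2.1 E hprod1
      have hg0 : g' = 0 := by
        ext i
        obtain ⟨m, j⟩ := i
        by_cases hmem : (⟨m, j⟩ : (n : ℕ) × Fin ((f n).length)) ∈ g'.support
        · have hmN : m < N := hsupN _ hmem
          have hthis := hE0 m hmN j j.isLt
          rw [hE] at hthis
          simp only [j.isLt, dif_pos] at hthis
          simpa using hthis
        · exact Finsupp.notMem_support_iff.mp hmem
      show g = 1
      exact hg0
    exact ⟨(MulEquiv.ofBijective myphi ⟨hinj, hsurj⟩).symm⟩
  · -- LocallyFiniteIndex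
    intro F
    choose nf hnf using hKcover
    set n : ℕ := F.sup nf with hn
    have hFK : (F : Set G) ⊆ (myK e n : Set G) := by
      intro x hxF
      exact myK_mono e (Finset.le_sup hxF) (hnf x)
    set J' : Subgroup G := H ⊔ myK e n with hJ'
    -- finite quotient of K n by Hup n
    have hrel := (hPP n).2.1 n le_rfl
    haveI hfinq : Finite (↥(myK e n) ⧸ (myHup f n).subgroupOf (myK e n)) :=
      Nat.finite_of_card_ne_zero hrel
    set T : Set G := Set.range
      (fun q : (↥(myK e n) ⧸ (myHup f n).subgroupOf (myK e n)) =>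
        ((Quotient.out q : ↥(myK e n)) : G)) with hT
    have hTfin : T.Finite := Set.finite_range _
    have hTJ : ∀ t ∈ T, t ∈ J' := by
      rintro t ⟨q, rfl⟩
      exact le_sup_right (a := H) ((Quotient.out q : ↥(myK e n)).2)
    have hcov : ∀ x ∈ J', ∃ t ∈ T, t⁻¹ * x ∈ H := by
      intro x hxJ
      have hx2 : x ∈ myK e n ⊔ Lg n := by
        have : J' = myK e n ⊔ Lg n := by
          rw [hJ', hHsplit n, sup_comm (myHup f n) (Lg n), sup_assoc,
            sup_eq_right.mpr (hHupK n), sup_comm]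
        rwa [← this]
      have hcomm' : ∀ a ∈ myK e n, ∀ b ∈ Lg n, a * b = b * a := by
        intro a ha b hb
        exact Subgroup.mem_centralizer_iff.mp (hLcent n hb) a ha
      obtain ⟨a, ha, c, hc, rfl⟩ := myMemSupOfCommute hcomm' x hx2
      set q := QuotientGroup.mk (s := (myHup f n).subgroupOf (myK e n)) ⟨a, ha⟩ with hq
      refine ⟨((Quotient.out q : ↥(myK e n)) : G), ⟨q, rfl⟩, ?_⟩
      have hout : (QuotientGroup.mk (Quotient.out q : ↥(myK e n)) :
          ↥(myK e n) ⧸ (myHup f n).subgroupOf (myK e n)) = q := by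
        exact Quotient.out_eq q
      rw [hq] at hout
      have hmem := QuotientGroup.eq.mp hout
      have hmem' : ((Quotient.out q : ↥(myK e n)) : G)⁻¹ * a ∈ myHup f n :=
        Subgroup.mem_subgroupOf.mp hmem
      have : ((Quotient.out q : ↥(myK e n)) : G)⁻¹ * (a * c)
          = (((Quotient.out q : ↥(myK e n)) : G)⁻¹ * a) * c := by group
      rw [this]
      exact Subgroup.mul_mem _ (hHupH n hmem') (hLgH n hc)
    have hJ'rel : H.relIndex J' ≠ 0 := myRelindexOfCover T hTfin hTJ hcov
    intro h0
    refine hJ'rel (Subgroup.relIndex_eq_zero_of_le_right ?_ h0)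
    refine sup_le le_sup_left ?_
    rw [Subgroup.closure_le]
    exact le_trans hFK (SetLike.coe_subset_coe.mpr le_sup_right)
  · -- quasiCentralizer
    ext x
    simp only [quasiCentralizer, Set.mem_setOf_eq, Set.mem_univ, iff_true]
    obtain ⟨n, hx⟩ := hKcover x
    obtain ⟨N, hNnorm, hNfin, hNcomm⟩ := hG (myK e n) (myK_fg e n)
    haveI := hNfin
    refine Set.Finite.subset (Set.finite_range
      (fun p : ↥N => x * (((p : ↥(myK e n)) : G)))) ?_
    rintro - ⟨h, hh, rfl⟩
    have hh' : h ∈ myHup f n ⊔ Lg n := by rw [← hHsplit n]; exact hh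
    obtain ⟨a, ha, c, hc, rfl⟩ := myMemSupOfCommute (hcommHL n) h hh'
    have haK : a ∈ myK e n := hHupK n ha
    have hyK : a⁻¹ * x * a ∈ myK e n :=
      Subgroup.mul_mem _ (Subgroup.mul_mem _ (Subgroup.inv_mem _ haK) hx) haK
    set xh : ↥(myK e n) := ⟨x, hx⟩ with hxh
    set ah : ↥(myK e n) := ⟨a, haK⟩ with hah
    have hν : xh⁻¹ * ah⁻¹ * xh * ah ∈ N := by
      have := hNcomm xh⁻¹ ah⁻¹
      simpa using this
    refine ⟨⟨_, hν⟩, ?_⟩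
    have hcy : (a⁻¹ * x * a) * c = c * (a⁻¹ * x * a) :=
      Subgroup.mem_centralizer_iff.mp (hLcent n hc) _ hyK
    have hval : (((⟨xh⁻¹ * ah⁻¹ * xh * ah, hν⟩ : ↥N) : ↥(myK e n)) : G)
        = x⁻¹ * a⁻¹ * x * a := by
      simp [hxh, hah]
    show x * _ = (a * c)⁻¹ * x * (a * c)
    rw [hval]
    have h1 : x * (x⁻¹ * a⁻¹ * x * a) = a⁻¹ * x * a := by group
    have h2 : (a * c)⁻¹ * x * (a * c) = c⁻¹ * ((a⁻¹ * x * a) * c) := by group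
    rw [h1, h2, hcy, inv_mul_cancel_left]
end

section
/- A finitely generated group is finite-by-abelian if and only if it is both abelian-by-finite and finite-by-nilpotent. -/
/-- A group is abelian-by-finite: it has an abelian normal subgroup with finite quotient. -/
def AbelianByFinite (G : Type*) [Group G] : Prop :=
  ∃ N : Subgroup G, N.Normal ∧ (∀ a b : G, a ∈ N → b ∈ N → a * b = b * a) ∧ Finite (G ⧸ N)

/-- A group is finite-by-nilpotent: it has a finite normal subgroup with nilpotent
quotient. -/
def FiniteByNilpotent (G : Type*) [Group G] : Prop :=
  ∃ N : Subgroup G, ∃ _ : N.Normal, Finite N ∧ Group.IsNilpotent (G ⧸ N)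



open Subgroup Pointwise
open scoped commutatorElement

section CommPow
variable {Q : Type*} [Group Q]

lemma commPowRight (p q : Q) (h : ∀ r : Q, ⁅p, r⁆ ∈ Subgroup.center Q) (n : ℕ) :
    ⁅p, q ^ n⁆ = ⁅p, q⁆ ^ n := by
  induction n with
  | zero => simp
  | succ n ih =>
    have key : ⁅p, q * q ^ n⁆ = ⁅p, q⁆ * (q * ⁅p, q ^ n⁆ * q⁻¹) := by
      simp only [commutatorElement_def]; group
    have hc : q * ⁅p, q ^ n⁆ * q⁻¹ = ⁅p, q ^ n⁆ := by
      have := (Subgroup.mem_center_iff.mp (h (q ^ n))) q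
      -- this : q * ⁅p, q^n⁆ = ⁅p, q^n⁆ * q ... mem_center_iff : ∀ g, g * z = z * g
      rw [this]; group
    rw [pow_succ', key, hc, ih, pow_succ']

lemma commPowLeft (H : Subgroup Q) (q : Q) (h : ∀ p' ∈ H, ⁅p', q⁆ ∈ Subgroup.center Q)
    (p : Q) (hp : p ∈ H) (n : ℕ) : ⁅p ^ n, q⁆ = ⁅p, q⁆ ^ n := by
  induction n with
  | zero => simp
  | succ n ih =>
    have key : ⁅p * p ^ n, q⁆ = p * ⁅p ^ n, q⁆ * p⁻¹ * ⁅p, q⁆ := by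
      simp only [commutatorElement_def]; group
    have hc : p * ⁅p ^ n, q⁆ * p⁻¹ = ⁅p ^ n, q⁆ := by
      have := (Subgroup.mem_center_iff.mp (h (p ^ n) (pow_mem hp n))) p
      rw [this]; group
    calc ⁅p ^ (n+1), q⁆ = ⁅p * p ^ n, q⁆ := by rw [pow_succ']
    _ = p * ⁅p ^ n, q⁆ * p⁻¹ * ⁅p, q⁆ := key
    _ = ⁅p ^ n, q⁆ * ⁅p, q⁆ := by rw [hc]
    _ = ⁅p, q⁆ ^ n * ⁅p, q⁆ := by rw [ih]
    _ = ⁅p, q⁆ ^ (n+1) := (pow_succ _ _).symm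

end CommPow

open Subgroup Pointwise

section MainAux
variable {G : Type} [Group G]

lemma keyPow (A K : Subgroup G) [K.Normal]
    (hA : ∀ a b : G, a ∈ A → b ∈ A → a * b = b * a)
    (m : ℕ) (hm : ∀ x : G, x ^ m ∈ A)
    (i : ℕ) (hK : Subgroup.lowerCentralSeries (⊤ : Subgroup G) (i + 2) ≤ K) :
    ∀ x ∈ Subgroup.lowerCentralSeries (⊤ : Subgroup G) (i + 1), x ^ (m * m) ∈ K := by
  set π := QuotientGroup.mk' K with hπ
  have hcent : ∀ y ∈ Subgroup.lowerCentralSeries (⊤ : Subgroup G) (i + 1), π y ∈ Subgroup.center (G ⧸ K) := by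
    intro y hy
    rw [Subgroup.mem_center_iff]
    intro q
    obtain ⟨g, rfl⟩ := QuotientGroup.mk'_surjective K q
    have h1 : ⁅y, g⁆ ∈ K := hK (by
      rw [show i + 2 = (i + 1) + 1 from rfl, Subgroup.lowerCentralSeries_succ]
      exact Subgroup.commutator_mem_commutator hy (Subgroup.mem_top g))
    have h2 : ⁅π y, π g⁆ = 1 := by
      rw [← map_commutatorElement]
      exact (QuotientGroup.eq_one_iff _).mpr h1
    have := commutatorElement_eq_one_iff_mul_comm.mp h2
    rw [this]
  -- the subgroup of central elements killed by m*m
  set T : Subgroup (G ⧸ K) :=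
    { carrier := {q | q ∈ Subgroup.center (G ⧸ K) ∧ q ^ (m * m) = 1}
      one_mem' := ⟨Subgroup.one_mem _, one_pow _⟩
      mul_mem' := by
        rintro a b ⟨ha, ha'⟩ ⟨hb, hb'⟩
        refine ⟨Subgroup.mul_mem _ ha hb, ?_⟩
        have hcomm : Commute a b := ((Subgroup.mem_center_iff.mp ha) b).symm
        rw [hcomm.mul_pow, ha', hb', one_mul]
      inv_mem' := by
        rintro a ⟨ha, ha'⟩
        exact ⟨Subgroup.inv_mem _ ha, by rw [inv_pow, ha', inv_one]⟩ } with hT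
  have main : Subgroup.lowerCentralSeries (⊤ : Subgroup G) (i + 1) ≤ T.comap π := by
    rw [Subgroup.lowerCentralSeries_succ]
    refine Subgroup.commutator_le.mpr ?_
    intro u hu g _
    have hmemT : π ⁅u, g⁆ ∈ T := by
      constructor
      · exact hcent _ (by rw [Subgroup.lowerCentralSeries_succ]; exact
          Subgroup.commutator_mem_commutator hu (Subgroup.mem_top g))
      · have h1 : ∀ r : G ⧸ K, ⁅π u, r⁆ ∈ Subgroup.center (G ⧸ K) := by
          intro r
          obtain ⟨g', rfl⟩ := QuotientGroup.mk'_surjective K r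
          rw [← map_commutatorElement]
          exact hcent _ (by rw [Subgroup.lowerCentralSeries_succ]; exact
            Subgroup.commutator_mem_commutator hu (Subgroup.mem_top g'))
        have h2 : ∀ p' ∈ (Subgroup.lowerCentralSeries (⊤ : Subgroup G) i).map π, ⁅p', π g ^ m⁆ ∈
            Subgroup.center (G ⧸ K) := by
          rintro p' ⟨u', hu', rfl⟩
          have : (π g) ^ m = π (g ^ m) := (map_pow _ _ _).symm
          rw [this, ← map_commutatorElement]
          exact hcent _ (by rw [Subgroup.lowerCentralSeries_succ]; exact
            Subgroup.commutator_mem_commutator hu' (Subgroup.mem_top _))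
        have step1 : ⁅π u, π g⁆ ^ m = ⁅π u, (π g) ^ m⁆ := (commPowRight _ _ h1 m).symm
        have step2 : ⁅π u, (π g) ^ m⁆ ^ m = ⁅(π u) ^ m, (π g) ^ m⁆ := by
          rw [commPowLeft ((Subgroup.lowerCentralSeries (⊤ : Subgroup G) i).map π) ((π g) ^ m) h2 (π u)
            ⟨u, hu, rfl⟩ m]
        have final : ⁅(π u) ^ m, (π g) ^ m⁆ = 1 := by
          rw [← map_pow, ← map_pow, ← map_commutatorElement]
          have : ⁅u ^ m, g ^ m⁆ = 1 :=
            commutatorElement_eq_one_iff_mul_comm.mpr (hA _ _ (hm u) (hm g))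
          rw [this, map_one]
        rw [map_commutatorElement, pow_mul, step1, step2, final]
    exact hmemT
  intro x hx
  have := main hx
  rw [Subgroup.mem_comap] at this
  have h2 : (π x) ^ (m * m) = 1 := this.2
  rw [← map_pow] at h2
  exact (QuotientGroup.eq_one_iff _).mp h2
lemma lcsPow (A F : Subgroup G) [F.Normal]
    (hA : ∀ a b : G, a ∈ A → b ∈ A → a * b = b * a)
    (m : ℕ) (hm : ∀ x : G, x ^ m ∈ A)
    (c : ℕ) (hlcs : Subgroup.lowerCentralSeries (⊤ : Subgroup G) c ≤ F) :
    ∀ (d i : ℕ) (x : G), 1 ≤ i → c ≤ i + d → x ∈ Subgroup.lowerCentralSeries (⊤ : Subgroup G) i →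
      ((x : G ⧸ F)) ^ ((m * m) ^ d) = 1 := by
  intro d
  induction d with
  | zero =>
    intro i x h1 hc hx
    rw [pow_zero, pow_one, QuotientGroup.eq_one_iff]
    exact hlcs (Subgroup.lowerCentralSeries_antitone _ (by omega) hx)
  | succ d ih =>
    intro i x h1 hc hx
    obtain ⟨j, rfl⟩ : ∃ j, i = j + 1 := ⟨i - 1, by omega⟩
    haveI : (Subgroup.lowerCentralSeries (⊤ : Subgroup G) (j + 2) ⊔ F).Normal := Subgroup.sup_normal _ _
    have hx2 : x ^ (m * m) ∈ Subgroup.lowerCentralSeries (⊤ : Subgroup G) (j + 2) ⊔ F :=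
      keyPow A (Subgroup.lowerCentralSeries (⊤ : Subgroup G) (j + 2) ⊔ F) hA m hm j le_sup_left x hx
    have hx3 : x ^ (m * m) ∈ ((Subgroup.lowerCentralSeries (⊤ : Subgroup G) (j + 2) : Set G) * (F : Set G)) := by
      rw [← Subgroup.mul_normal]; exact hx2
    obtain ⟨y, hy, f, hf, hyf⟩ := hx3
    have hmk : ((x : G ⧸ F)) ^ (m * m) = ((y : G ⧸ F)) := by
      rw [← QuotientGroup.mk_pow, ← hyf, QuotientGroup.mk_mul,
        (QuotientGroup.eq_one_iff f).mpr hf, mul_one]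
    have ihy : ((y : G ⧸ F)) ^ ((m * m) ^ d) = 1 :=
      ih (j + 2) y (by omega) (by omega) hy
    calc ((x : G ⧸ F)) ^ ((m * m) ^ (d + 1))
        = (((x : G ⧸ F)) ^ (m * m)) ^ ((m * m) ^ d) := by
          rw [← pow_mul, pow_succ, mul_comm ((m*m)^d)]
    _ = 1 := by rw [hmk, ihy]

lemma finiteQuotSubgroupOf (A H : Subgroup G) [Finite (G ⧸ A)] :
    Finite (H ⧸ A.subgroupOf H) := by
  refine Finite.of_injective
    (fun q : H ⧸ A.subgroupOf H =>
      Quotient.liftOn' q (fun h => ((h : G) : G ⧸ A)) ?_) ?_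
  · intro a b hab
    have hab' : a⁻¹ * b ∈ A.subgroupOf H := QuotientGroup.leftRel_apply.mp hab
    rw [Subgroup.mem_subgroupOf] at hab'
    exact QuotientGroup.eq.mpr hab'
  · intro q1 q2
    induction q1 using Quotient.inductionOn'
    induction q2 using Quotient.inductionOn'
    intro h
    simp only [Quotient.liftOn'_mk''] at h
    apply Quotient.sound'
    rw [QuotientGroup.leftRel_apply, Subgroup.mem_subgroupOf]
    exact QuotientGroup.eq.mp h
lemma fgSubgroupOfComm {A : Type*} [CommGroup A] [Group.FG A] (S : Subgroup A) :
    Group.FG ↥S := by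
  haveI : Module.Finite ℤ (Additive A) :=
    Module.Finite.iff_addGroup_fg.mpr inferInstance
  haveI : IsNoetherian ℤ (Additive A) := isNoetherian_of_isNoetherianRing_of_finite ℤ _
  have hfg : (AddSubgroup.toIntSubmodule (S.toAddSubgroup)).FG :=
    IsNoetherian.noetherian _
  rw [Submodule.fg_iff_addSubgroup_fg, AddSubgroup.toIntSubmodule_toAddSubgroup] at hfg
  rw [Group.fg_iff_subgroup_fg]
  exact (Subgroup.fg_iff_add_fg S).mpr hfg

lemma finiteCommutator (hfg : Group.FG G)
    (A : Subgroup G) (hA : ∀ a b : G, a ∈ A → b ∈ A → a * b = b * a) [A.Normal]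
    [Finite (G ⧸ A)]
    (F : Subgroup G) [F.Normal] [Finite F] (hnil : Group.IsNilpotent (G ⧸ F)) :
    Finite (commutator G) := by
  haveI := hfg
  set m := A.index with hmdef
  have hm0 : m ≠ 0 := Subgroup.index_ne_zero_of_finite
  have hm : ∀ x : G, x ^ m ∈ A := fun x => A.pow_index_mem x
  obtain ⟨c, hc⟩ := Subgroup.nilpotent_iff_lowerCentralSeries.mp hnil
  have hlcs : Subgroup.lowerCentralSeries (⊤ : Subgroup G) c ≤ F := by
    intro x hx
    have hmem : QuotientGroup.mk' F x ∈ Subgroup.lowerCentralSeries (⊤ : Subgroup (G ⧸ F)) c :=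
      Subgroup.lowerCentralSeries.map (QuotientGroup.mk' F) c ⟨x, hx, rfl⟩
    rw [hc, Subgroup.mem_bot] at hmem
    exact (QuotientGroup.eq_one_iff x).mp hmem
  set E := (m * m) ^ c with hEdef
  have hE0 : E ≠ 0 := pow_ne_zero _ (Nat.mul_ne_zero hm0 hm0)
  have hcomm : ∀ x ∈ commutator G, x ^ E ∈ F := by
    intro x hx
    have h1 : ((x : G ⧸ F)) ^ E = 1 :=
      lcsPow A F hA m hm c hlcs c 1 x le_rfl (by omega)
        (by rw [Subgroup.top_lowerCentralSeries_one]; exact hx)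
    rw [← QuotientGroup.mk_pow, QuotientGroup.eq_one_iff] at h1
    exact h1
  have htor : ∀ x : G, x ∈ A ⊓ commutator G → IsOfFinOrder x := by
    intro x hx
    have hxE : x ^ E ∈ F := hcomm x hx.2
    obtain ⟨k, hk0, hk⟩ := isOfFinOrder_iff_pow_eq_one.mp
      (isOfFinOrder_of_finite (⟨x ^ E, hxE⟩ : F))
    refine isOfFinOrder_iff_pow_eq_one.mpr ⟨E * k, ?_, ?_⟩
    · exact Nat.mul_pos (Nat.pos_of_ne_zero hE0) hk0
    · have hk' : ((⟨x ^ E, hxE⟩ : F) : G) ^ k = 1 := by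
        rw [← Subgroup.coe_pow, hk, Subgroup.coe_one]
      rw [pow_mul]
      exact hk'
  letI : CommGroup ↥A :=
    { (inferInstance : Group ↥A) with
      mul_comm := fun a b => Subtype.ext (hA a b a.2 b.2) }
  haveI : A.FiniteIndex := ⟨hm0⟩
  haveI : Group.FG ↥A := Subgroup.fg_of_index_ne_zero A
  set S := (A ⊓ commutator G).subgroupOf A with hSdef
  haveI : Group.FG ↥S := fgSubgroupOfComm S
  have hStor : Monoid.IsTorsion ↥S := by
    intro s
    have hx : ((s : ↥A) : G) ∈ A ⊓ commutator G := s.2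
    obtain ⟨k, hk0, hk⟩ := isOfFinOrder_iff_pow_eq_one.mp (htor _ hx)
    refine isOfFinOrder_iff_pow_eq_one.mpr ⟨k, hk0, ?_⟩
    ext
    push_cast
    rw [hk]
  haveI : Finite ↥S := CommGroup.finite_of_fg_torsion ↥S hStor
  haveI : Finite ↥(A ⊓ commutator G) :=
    Finite.of_equiv _ (Subgroup.subgroupOfEquivOfLe inf_le_left).toEquiv
  haveI : Finite ↥(A.subgroupOf (commutator G)) := by
    rw [← Subgroup.inf_subgroupOf_right]
    exact Finite.of_equiv _ (Subgroup.subgroupOfEquivOfLe inf_le_right).toEquiv.symm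
  haveI : Finite ((commutator G) ⧸ A.subgroupOf (commutator G)) :=
    finiteQuotSubgroupOf A (commutator G)
  exact Finite.of_equiv _
    (Subgroup.groupEquivQuotientProdSubgroup (s := A.subgroupOf (commutator G))).symm
lemma abelianByFiniteOf (hfg : Group.FG G) (N : Subgroup G) [hNn : N.Normal] [Finite N]
    (hN : ∀ a b : G, a * b * a⁻¹ * b⁻¹ ∈ N) :
    ∃ Z : Subgroup G, Z.Normal ∧ (∀ a b : G, a ∈ Z → b ∈ Z → a * b = b * a) ∧
      Finite (G ⧸ Z) := by
  haveI := hfg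
  set C := Subgroup.centralizer (N : Set G) with hC
  haveI hCnormal : C.Normal := by
    constructor
    intro c hc g
    rw [Subgroup.mem_centralizer_iff] at hc ⊢
    intro n hn
    have h1 : g⁻¹ * n * g ∈ N := by
      have := hNn.conj_mem n hn g⁻¹
      simpa using this
    have h2 := hc _ h1
    calc n * (g * c * g⁻¹) = g * ((g⁻¹ * n * g) * c) * g⁻¹ := by group
    _ = g * (c * (g⁻¹ * n * g)) * g⁻¹ := by rw [h2]
    _ = (g * c * g⁻¹) * n := by group
  haveI hGC : Finite (G ⧸ C) := by
    refine Finite.of_injective (fun q : G ⧸ C =>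
      Quotient.liftOn' q
        (fun g => (fun n : N => (⟨g * n * g⁻¹, hNn.conj_mem n n.2 g⟩ : N))) ?_) ?_
    · intro a b hab
      have hab' : a⁻¹ * b ∈ C := QuotientGroup.leftRel_apply.mp hab
      rw [Subgroup.mem_centralizer_iff] at hab'
      funext n
      apply Subtype.ext
      have h := hab' n n.2
      calc a * (n : G) * a⁻¹ = a * ((n : G) * (a⁻¹ * b)) * b⁻¹ := by group
      _ = a * ((a⁻¹ * b) * (n : G)) * b⁻¹ := by rw [h]
      _ = b * (n : G) * b⁻¹ := by group
    · intro q1 q2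
      induction q1 using Quotient.inductionOn'
      induction q2 using Quotient.inductionOn'
      intro h
      simp only [Quotient.liftOn'_mk''] at h
      apply Quotient.sound'
      rw [QuotientGroup.leftRel_apply, Subgroup.mem_centralizer_iff]
      rename_i x y
      intro n hn
      have h2 := congrFun h ⟨n, hn⟩
      rw [Subtype.ext_iff] at h2
      dsimp at h2
      -- x n x⁻¹ = y n y⁻¹ ⇒ n * (x⁻¹ y) = (x⁻¹ y) * n
      calc n * (x⁻¹ * y) = x⁻¹ * ((x * n * x⁻¹) * y) := by group
      _ = x⁻¹ * ((y * n * y⁻¹) * y) := by rw [h2]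
      _ = (x⁻¹ * y) * n := by group
  haveI : C.FiniteIndex := ⟨Subgroup.index_ne_zero_of_finite⟩
  haveI hCfg : Group.FG ↥C := Subgroup.fg_of_index_ne_zero C
  obtain ⟨Sset, hclos, hSfin⟩ := (Subgroup.fg_iff C).mp ((Group.fg_iff_subgroup_fg C).mp hCfg)
  haveI : Finite ↥Sset := hSfin.to_subtype
  have hsub : Sset ⊆ (C : Set G) := hclos ▸ Subgroup.subset_closure
  set Z := Subgroup.centralizer (C : Set G) ⊓ C with hZ
  have hZle : Z ≤ C := inf_le_right
  haveI hCZ : Finite (C ⧸ Z.subgroupOf C) := by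
    refine Finite.of_injective (fun q : C ⧸ Z.subgroupOf C =>
      Quotient.liftOn' q (fun c : ↥C => (fun s : Sset =>
        (⟨(c : G) * s * (c : G)⁻¹ * (s : G)⁻¹, hN _ _⟩ : N))) ?_) ?_
    · intro a b hab
      have hab0 : a⁻¹ * b ∈ Z.subgroupOf C := QuotientGroup.leftRel_apply.mp hab
      have hab' : ((a⁻¹ * b : ↥C) : G) ∈ Z := Subgroup.mem_subgroupOf.mp hab0
      obtain ⟨hc1, hc2⟩ := Subgroup.mem_inf.mp hab'
      have hcent := Subgroup.mem_centralizer_iff.mp hc1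
      funext s
      apply Subtype.ext
      have hsC : (s : G) ∈ C := hsub s.2
      have h := hcent (s : G) hsC
      have h' : (s : G) * ((a : G)⁻¹ * (b : G)) = ((a : G)⁻¹ * (b : G)) * (s : G) := by
        simpa using h
      dsimp
      calc (a : G) * s * (a : G)⁻¹ * (s : G)⁻¹
          = (a : G) * ((s : G) * ((a : G)⁻¹ * (b : G))) * (b : G)⁻¹ * (s : G)⁻¹ := by group
      _ = (a : G) * (((a : G)⁻¹ * (b : G)) * (s : G)) * (b : G)⁻¹ * (s : G)⁻¹ := by rw [h']
      _ = (b : G) * s * (b : G)⁻¹ * (s : G)⁻¹ := by group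
    · intro q1 q2
      induction q1 using Quotient.inductionOn'
      induction q2 using Quotient.inductionOn'
      intro h
      simp only [Quotient.liftOn'_mk''] at h
      apply Quotient.sound'
      rw [QuotientGroup.leftRel_apply]
      rename_i x y
      rw [Subgroup.mem_subgroupOf]
      have hd : ∀ s ∈ Sset, s * ((x : G)⁻¹ * (y : G)) = ((x : G)⁻¹ * (y : G)) * s := by
        intro s hs
        have h2 := congrFun h ⟨s, hs⟩
        rw [Subtype.ext_iff] at h2
        dsimp at h2
        have h3 : (x : G) * s * (x : G)⁻¹ = (y : G) * s * (y : G)⁻¹ := by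
          have := congrArg (fun t => t * s) h2
          simpa [mul_assoc] using this
        calc s * ((x : G)⁻¹ * (y : G)) = (x : G)⁻¹ * (((x : G) * s * (x : G)⁻¹) * (y : G)) := by
              group
        _ = (x : G)⁻¹ * (((y : G) * s * (y : G)⁻¹) * (y : G)) := by rw [h3]
        _ = ((x : G)⁻¹ * (y : G)) * s := by group
      refine Subgroup.mem_inf.mpr ⟨?_, Subgroup.mul_mem _ (Subgroup.inv_mem _ x.2) y.2⟩
      have hle : Subgroup.closure Sset ≤ Subgroup.centralizer {(x : G)⁻¹ * (y : G)} := by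
        rw [Subgroup.closure_le]
        intro s hs
        rw [SetLike.mem_coe, Subgroup.mem_centralizer_singleton_iff]
        exact hd s hs
      rw [hclos] at hle
      refine Subgroup.mem_centralizer_iff.mpr ?_
      intro h' hh'
      have := hle hh'
      rw [Subgroup.mem_centralizer_singleton_iff] at this
      simpa using this
  have hZC : Z.relIndex C ≠ 0 := by
    have : Z.relIndex C = (Z.subgroupOf C).index := rfl
    rw [this]
    exact Subgroup.index_ne_zero_of_finite
  have hZidx : Z.index ≠ 0 := by
    have hmul := Subgroup.relIndex_mul_index hZle
    rw [← hmul]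
    exact Nat.mul_ne_zero hZC Subgroup.index_ne_zero_of_finite
  haveI : Finite (G ⧸ Z) := by
    apply Nat.finite_of_card_ne_zero
    rwa [← Subgroup.index_eq_card]
  refine ⟨Z, ?_, ?_, inferInstance⟩
  · constructor
    intro z hz g
    obtain ⟨hz1, hz2⟩ := Subgroup.mem_inf.mp hz
    refine Subgroup.mem_inf.mpr ⟨?_, hCnormal.conj_mem z hz2 g⟩
    rw [Subgroup.mem_centralizer_iff] at hz1
    refine Subgroup.mem_centralizer_iff.mpr ?_
    intro h hh
    have h1 : g⁻¹ * h * g ∈ C := by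
      have := hCnormal.conj_mem h hh g⁻¹
      simpa using this
    have h2 := hz1 _ h1
    calc h * (g * z * g⁻¹) = g * ((g⁻¹ * h * g) * z) * g⁻¹ := by group
    _ = g * (z * (g⁻¹ * h * g)) * g⁻¹ := by rw [h2]
    _ = (g * z * g⁻¹) * h := by group
  · intro a b ha hb
    obtain ⟨ha1, _⟩ := Subgroup.mem_inf.mp ha
    obtain ⟨_, hb2⟩ := Subgroup.mem_inf.mp hb
    exact (Subgroup.mem_centralizer_iff.mp ha1 b hb2).symm
end MainAux

/-- A finitely generated group is finite-by-abelian iff it is both abelian-by-finite and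
finite-by-nilpotent. -/
theorem fg_finiteByAbelian_iff_abelianByFinite_and_finiteByNilpotent
    (G : Type) [Group G] (hfg : Group.FG G) :
    FiniteByAbelian G ↔ (AbelianByFinite G ∧ FiniteByNilpotent G) := by
  constructor
  · rintro ⟨N, hNnorm, hNfin, hNcomm⟩
    haveI := hNnorm; haveI := hNfin
    constructor
    · exact abelianByFiniteOf hfg N hNcomm
    · refine ⟨N, hNnorm, hNfin, ?_⟩
      letI : CommGroup (G ⧸ N) :=
        { (inferInstance : Group (G ⧸ N)) with
          mul_comm := by
            intro a b
            induction a using QuotientGroup.induction_on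
            induction b using QuotientGroup.induction_on
            rename_i z w
            rw [← QuotientGroup.mk_mul, ← QuotientGroup.mk_mul, QuotientGroup.eq]
            have h := hNcomm w⁻¹ z⁻¹
            simpa [mul_assoc] using h }
      infer_instance
  · rintro ⟨⟨A, hAnorm, hAcomm, hAfin⟩, ⟨F, hFnorm, hFfin, hFnil⟩⟩
    haveI := hAnorm; haveI := hAfin; haveI := hFnorm; haveI := hFfin
    haveI : Finite (commutator G) := finiteCommutator hfg A hAcomm F hFnil
    refine ⟨commutator G, inferInstance, inferInstance, ?_⟩
    intro a b
    have h : a * b * a⁻¹ * b⁻¹ = ⁅a, b⁆ := rfl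
    rw [h]
    exact Subgroup.commutator_mem_commutator (Subgroup.mem_top a) (Subgroup.mem_top b)
end
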